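/- For every positive integer t with t² ≥ k, the graph G = G(t, t² − t + 1) satisfies Δ(G) = t², ι_k(G) = t, and ι'_k(G) = t³ − 2t² + 2t; consequently ι'_k(G)/ι_k(G) = Δ(G) − 2√(Δ(G)) + 2, showing the ratio bound ι'_k/ι_k ≤ Δ − 2√Δ + 2 is sharp whenever Δ is a perfect square. -/

import Mathlib

open SimpleGraph

variable {V : Type*}

/-- The closed neighborhood `N[S]` of a set of vertices. -/
def closedNbhd (G : SimpleGraph V) (S : Set V) : Set V :=
  {v | v ∈ S ∨ ∃ u ∈ S, G.Adj u v}

/-- The open neighborhood `N(S)` of a set of vertices. -/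
def openNbhd (G : SimpleGraph V) (S : Set V) : Set V :=
  {v | ∃ u ∈ S, G.Adj u v}

/-- A set is independent if no two of its vertices are adjacent. -/
def IsIndep (G : SimpleGraph V) (S : Set V) : Prop :=
  S.Pairwise fun u w => ¬ G.Adj u w

/-- `S` is `K_k`-isolating: `G - N[S]` contains no clique of size `k`. -/
def IsIsolating (G : SimpleGraph V) (k : ℕ) (S : Set V) : Prop :=
  ∀ T : Finset V, (↑T : Set V) ∩ closedNbhd G S = ∅ → G.IsClique ↑T → T.card ≠ k

/-- The `K_k`-isolation number `ι_k(G)`. -/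
noncomputable def iota [Fintype V] (G : SimpleGraph V) (k : ℕ) : ℕ :=
  sInf {n | ∃ S : Finset V, S.card = n ∧ IsIsolating G k ↑S}

/-- The independent `K_k`-isolation number `ι'_k(G)`. -/
noncomputable def iota' [Fintype V] (G : SimpleGraph V) (k : ℕ) : ℕ :=
  sInf {n | ∃ S : Finset V, S.card = n ∧ IsIsolating G k ↑S ∧ IsIndep G ↑S}

/-- A dominating set: every vertex lies in `N[S]`. -/
def IsDominating (G : SimpleGraph V) (S : Set V) : Prop :=
  ∀ v, v ∈ closedNbhd G S

/-- The domination number `γ(G)`. -/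
noncomputable def gammaNum [Fintype V] (G : SimpleGraph V) : ℕ :=
  sInf {n | ∃ S : Finset V, S.card = n ∧ IsDominating G ↑S}

/-- The independent domination number `i(G)`. -/
noncomputable def iNum [Fintype V] (G : SimpleGraph V) : ℕ :=
  sInf {n | ∃ S : Finset V, S.card = n ∧ IsDominating G ↑S ∧ IsIndep G ↑S}

/-- `G` is `K_{1,r}`-free: no induced subgraph isomorphic to the star `K_{1,r}`. -/
def K1rFree (G : SimpleGraph V) (r : ℕ) : Prop :=
  IsEmpty (completeBipartiteGraph (Fin 1) (Fin r) ↪g G)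

/-- Degree of `v` inside the vertex subset `T`. -/
def degIn [DecidableEq V] (G : SimpleGraph V) [DecidableRel G.Adj] (T : Finset V) (v : V) : ℕ :=
  (T.filter (G.Adj v)).card

/-- Vertices of `G(t,s)`: `inl i` is the clique vertex `xᵢ`; `inr (i, i', j)` is the `j`-th
vertex of the copy `K^{i,i'}_k`, with `y_{i,i'}` being the one with `j = 0`. -/
abbrev GtsVertex (t s k : ℕ) := Fin t ⊕ Fin t × Fin s × Fin k

/-- The graph `G(t,s)`: a clique on `x₁,…,x_t` and `s·t` disjoint copies of `K_k`, with
`xᵢ` joined to the vertex `y_{i,i'}` (index `0`) of each copy `K^{i,i'}_k`. -/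
def GraphGts (t s k : ℕ) : SimpleGraph (GtsVertex t s k) where
  Adj a b := match a, b with
    | Sum.inl i, Sum.inl j => i ≠ j
    | Sum.inl i, Sum.inr (a, _, c) => a = i ∧ (c : ℕ) = 0
    | Sum.inr (a, _, c), Sum.inl i => a = i ∧ (c : ℕ) = 0
    | Sum.inr (a, b, c), Sum.inr (a', b', c') => a = a' ∧ b = b' ∧ c ≠ c'
  symm := by
    constructor
    rintro (i | ⟨a, b, c⟩) (j | ⟨a', b', c'⟩) h
    · exact h.symm
    · exact h
    · exact h
    · exact ⟨h.1.symm, h.2.1.symm, h.2.2.symm⟩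
  loopless := by
    constructor
    rintro (i | ⟨a, b, c⟩) h
    · exact h rfl
    · exact h.2.2 rfl

instance (t s k : ℕ) : DecidableRel (GraphGts t s k).Adj := fun a b =>
  match a, b with
  | Sum.inl i, Sum.inl j => inferInstanceAs (Decidable (i ≠ j))
  | Sum.inl i, Sum.inr (a, _, c) => inferInstanceAs (Decidable (a = i ∧ (c : ℕ) = 0))
  | Sum.inr (a, _, c), Sum.inl i => inferInstanceAs (Decidable (a = i ∧ (c : ℕ) = 0))
  | Sum.inr (a, b, c), Sum.inr (a', b', c') =>
      inferInstanceAs (Decidable (a = a' ∧ b = b' ∧ c ≠ c'))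


section GtsAux
open Finset

variable {t s k : ℕ}

lemma adj_ll {i j : Fin t} : (GraphGts t s k).Adj (Sum.inl i) (Sum.inl j) ↔ i ≠ j := Iff.rfl

lemma adj_lr {i a : Fin t} {b : Fin s} {c : Fin k} :
    (GraphGts t s k).Adj (Sum.inl i) (Sum.inr (a, b, c)) ↔ a = i ∧ (c : ℕ) = 0 := Iff.rfl

lemma adj_rl {i a : Fin t} {b : Fin s} {c : Fin k} :
    (GraphGts t s k).Adj (Sum.inr (a, b, c)) (Sum.inl i) ↔ a = i ∧ (c : ℕ) = 0 := Iff.rfl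

lemma adj_rr {a a' : Fin t} {b b' : Fin s} {c c' : Fin k} :
    (GraphGts t s k).Adj (Sum.inr (a, b, c)) (Sum.inr (a', b', c')) ↔
      a = a' ∧ b = b' ∧ c ≠ c' := Iff.rfl

/-- A clique consisting only of non-`y` copy vertices has fewer than `k` vertices. -/
lemma clique_small (hk : 0 < k) (T : Finset (GtsVertex t s k))
    (hcl : (GraphGts t s k).IsClique ↑T)
    (hall : ∀ v ∈ T, ∃ a b c, v = Sum.inr (a, b, c) ∧ (c : ℕ) ≠ 0) : T.card ≠ k := by
  classical
  set f : GtsVertex t s k → Fin k := Sum.elim (fun _ => (⟨0, hk⟩ : Fin k)) (fun p => p.2.2)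
     with hf
  have hinj : Set.InjOn f ↑T := by
    intro u hu w hw hEq
    by_contra hne
    have hadj := hcl hu hw hne
    obtain ⟨a, b, c, rfl, hc⟩ := hall u hu
    obtain ⟨a', b', c', rfl, hc'⟩ := hall w hw
    exact (adj_rr.mp hadj).2.2 (by simpa [hf] using hEq)
  have hsub : T.image f ⊆
      Finset.univ.filter (fun c : Fin k => (c : ℕ) ≠ 0) := by
    intro c hc
    simp only [Finset.mem_image] at hc
    obtain ⟨v, hv, rfl⟩ := hc
    obtain ⟨a, b, c, rfl, hc0⟩ := hall v hv
    simpa [hf] using hc0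
  have h1 : T.card ≤ (Finset.univ.filter (fun c : Fin k => (c : ℕ) ≠ 0)).card := by
    rw [← Finset.card_image_of_injOn hinj]
    exact Finset.card_le_card hsub
  have h2 : (Finset.univ.filter (fun c : Fin k => (c : ℕ) ≠ 0)).card < k := by
    have : (⟨0, hk⟩ : Fin k) ∉ Finset.univ.filter (fun c : Fin k => (c : ℕ) ≠ 0) := by simp
    calc (Finset.univ.filter (fun c : Fin k => (c : ℕ) ≠ 0)).card
        < (Finset.univ : Finset (Fin k)).card :=
          Finset.card_lt_card ⟨Finset.filter_subset _ _, fun hs => this (hs (Finset.mem_univ _))⟩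
      _ = k := by simp
  omega

/-- The copy `K^{i,i'}_k` as a finset. -/
def copyT (t s k : ℕ) (i : Fin t) (i' : Fin s) : Finset (GtsVertex t s k) :=
  Finset.univ.image fun c : Fin k => Sum.inr (i, i', c)

lemma copyT_card (i : Fin t) (i' : Fin s) : (copyT t s k i i').card = k := by
  rw [copyT, Finset.card_image_of_injective _ (fun c c' h => by simpa using h)]
  simp

lemma copyT_clique (i : Fin t) (i' : Fin s) :
    (GraphGts t s k).IsClique ↑(copyT t s k i i') := by
  intro u hu w hw hne
  simp only [copyT, Finset.coe_image, Set.mem_image] at hu hw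
  obtain ⟨c, -, rfl⟩ := hu
  obtain ⟨c', -, rfl⟩ := hw
  exact adj_rr.mpr ⟨rfl, rfl, fun hcc => hne (by rw [hcc])⟩


/-- Every copy must be "covered" by an isolating set. -/
lemma cover_of_isolating (hk : 0 < k) {S : Finset (GtsVertex t s k)}
    (hS : IsIsolating (GraphGts t s k) k ↑S) (i : Fin t) (i' : Fin s) :
    ∃ u ∈ S, u = Sum.inl i ∨ ∃ c, u = Sum.inr (i, i', c) := by
  classical
  by_contra hcon
  push_neg at hcon
  refine hS (copyT t s k i i') ?_ (copyT_clique i i') (copyT_card i i')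
  ext w
  simp only [Set.mem_inter_iff, Set.mem_empty_iff_false, iff_false, not_and]
  intro hw hcl
  simp only [copyT, Finset.coe_image, Set.mem_image] at hw
  obtain ⟨c, -, rfl⟩ := hw
  rcases hcl with hmem | ⟨u, hu, hadj⟩
  · exact (hcon _ hmem).2 c rfl
  · rcases u with j | ⟨a, b, c'⟩
    · obtain ⟨rfl, -⟩ := adj_rl.mp hadj.symm
      exact (hcon _ hu).1 rfl
    · obtain ⟨rfl, rfl, -⟩ := adj_rr.mp hadj
      exact (hcon _ hu).2 c' rfl

/-- Lower bound: an isolating set has at least `t` vertices. -/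
lemma isolating_card_ge (hk : 0 < k) (hs : 0 < s) {S : Finset (GtsVertex t s k)}
    (hS : IsIsolating (GraphGts t s k) k ↑S) : t ≤ S.card := by
  classical
  set cov : GtsVertex t s k → Finset (Fin t × Fin s) :=
    Sum.elim (fun i => {i} ×ˢ Finset.univ) (fun p => {(p.1, p.2.1)}) with hcov
  have hsub : (Finset.univ : Finset (Fin t × Fin s)) ⊆ S.biUnion cov := by
    intro p _
    obtain ⟨u, hu, hcase⟩ := cover_of_isolating hk hS p.1 p.2
    refine Finset.mem_biUnion.mpr ⟨u, hu, ?_⟩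
    rcases hcase with rfl | ⟨c, rfl⟩
    · simp [hcov]
    · simp [hcov]
  have h1 : t * s ≤ (S.biUnion cov).card := by
    calc t * s = (Finset.univ : Finset (Fin t × Fin s)).card := by simp
      _ ≤ _ := Finset.card_le_card hsub
  have h2 : (S.biUnion cov).card ≤ S.card * s := by
    refine le_trans (Finset.card_biUnion_le) ?_
    have : ∀ u ∈ S, (cov u).card ≤ s := by
      intro u _
      rcases u with i | p
      · simp [hcov]
      · simpa [hcov] using Nat.one_le_of_lt hs
    calc ∑ u ∈ S, (cov u).card ≤ ∑ _u ∈ S, s := Finset.sum_le_sum this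
      _ = S.card * s := by simp [Finset.sum_const, mul_comm]
  exact Nat.le_of_mul_le_mul_right (h1.trans h2) hs

/-- `{x₁,…,x_t}` is isolating. -/
lemma isolating_inl (hk : 0 < k) (hs : 0 < s) :
    IsIsolating (GraphGts t s k) k
      ↑((Finset.univ : Finset (Fin t)).image (Sum.inl : Fin t → GtsVertex t s k)) := by
  classical
  intro T hdisj hcl
  refine clique_small hk T hcl fun v hv => ?_
  have hv' : v ∉ closedNbhd (GraphGts t s k)
      ↑((Finset.univ : Finset (Fin t)).image (Sum.inl : Fin t → GtsVertex t s k)) := by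
    intro hmem
    have : v ∈ (↑T : Set (GtsVertex t s k)) ∩ _ := ⟨hv, hmem⟩
    rw [hdisj] at this
    exact this
  rcases v with i | ⟨a, b, c⟩
  · exact absurd (Or.inl (by simp)) hv'
  · refine ⟨a, b, c, rfl, fun hc0 => ?_⟩
    refine hv' (Or.inr ⟨Sum.inl a, by simp, adj_lr.mpr ⟨rfl, hc0⟩⟩)

lemma iota_eq (hk : 0 < k) (hs : 0 < s) : iota (GraphGts t s k) k = t := by
  classical
  have hmem : t ∈ {n | ∃ S : Finset (GtsVertex t s k), S.card = n ∧
      IsIsolating (GraphGts t s k) k ↑S} := by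
    refine ⟨(Finset.univ : Finset (Fin t)).image Sum.inl, ?_, isolating_inl hk hs⟩
    rw [Finset.card_image_of_injective _ Sum.inl_injective]
    simp
  refine le_antisymm (Nat.sInf_le hmem) (le_csInf ⟨t, hmem⟩ ?_)
  rintro n ⟨S, rfl, hiso⟩
  exact isolating_card_ge hk hs hiso

/-- The independent isolating witness set. -/
def Sprime (t s k : ℕ) (hk : 0 < k) (i₀ : Fin t) : Finset (GtsVertex t s k) :=
  insert (Sum.inl i₀)
    (((Finset.univ.erase i₀) ×ˢ (Finset.univ : Finset (Fin s))).image
      fun p => Sum.inr (p.1, p.2, ⟨0, hk⟩))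

lemma Sprime_card (hk : 0 < k) (i₀ : Fin t) :
    (Sprime t s k hk i₀).card = 1 + (t - 1) * s := by
  classical
  rw [Sprime, Finset.card_insert_of_notMem (by simp)]
  rw [Finset.card_image_of_injOn (by
    rintro ⟨a, b⟩ - ⟨a', b'⟩ - hEq
    simpa [Prod.ext_iff] using hEq)]
  simp [Nat.add_comm]

lemma Sprime_indep (hk : 0 < k) (i₀ : Fin t) :
    IsIndep (GraphGts t s k) ↑(Sprime t s k hk i₀) := by
  classical
  intro u hu w hw hne hadj
  simp only [Sprime, Finset.coe_insert, Set.mem_insert_iff, Finset.coe_image,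
    Set.mem_image, Finset.mem_coe, Finset.mem_product, Finset.mem_erase] at hu hw
  rcases hu with rfl | ⟨⟨a, b⟩, ⟨⟨ha, -⟩, -⟩, rfl⟩ <;>
    rcases hw with rfl | ⟨⟨a', b'⟩, ⟨⟨ha', -⟩, -⟩, rfl⟩
  · exact hne rfl
  · exact ha' (adj_lr.mp hadj).1
  · exact ha (adj_rl.mp hadj).1
  · exact (adj_rr.mp hadj).2.2 rfl

lemma Sprime_isolating (hk : 0 < k) (i₀ : Fin t) :
    IsIsolating (GraphGts t s k) k ↑(Sprime t s k hk i₀) := by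
  classical
  intro T hdisj hcl
  refine clique_small hk T hcl fun v hv => ?_
  have hv' : v ∉ closedNbhd (GraphGts t s k) ↑(Sprime t s k hk i₀) := by
    intro hmem
    have : v ∈ (↑T : Set (GtsVertex t s k)) ∩ _ := ⟨hv, hmem⟩
    rw [hdisj] at this
    exact this
  rcases v with j | ⟨a, b, c⟩
  · refine absurd ?_ hv'
    by_cases hj : j = i₀
    · exact Or.inl (by simp [Sprime, hj])
    · refine Or.inr ⟨Sum.inl i₀, by simp [Sprime], adj_ll.mpr fun hEq => hj hEq.symm⟩
  · refine ⟨a, b, c, rfl, fun hc0 => ?_⟩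
    by_cases ha : a = i₀
    · exact hv' (Or.inr ⟨Sum.inl i₀, by simp [Sprime], adj_lr.mpr ⟨ha, hc0⟩⟩)
    · refine hv' ?_
      by_cases hcz : c = ⟨0, hk⟩
      · exact Or.inl (by simp [Sprime, hcz, ha])
      · refine Or.inr ⟨Sum.inr (a, b, ⟨0, hk⟩), by simp [Sprime, ha],
          adj_rr.mpr ⟨rfl, rfl, fun hEq => hcz hEq.symm⟩⟩

lemma indep_isolating_card_ge (hk : 0 < k) (ht : 0 < t) (hs : 0 < s)
    {S : Finset (GtsVertex t s k)} (hiso : IsIsolating (GraphGts t s k) k ↑S)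
    (hind : IsIndep (GraphGts t s k) ↑S) : 1 + (t - 1) * s ≤ S.card := by
  classical
  by_cases hex : ∃ i₀ : Fin t, Sum.inl i₀ ∈ S
  · obtain ⟨i₀, hi₀⟩ := hex
    have hch : ∀ p : Fin t × Fin s, ∃ u, p.1 ≠ i₀ →
        u ∈ S ∧ ∃ c, u = Sum.inr (p.1, p.2, c) := by
      intro p
      by_cases hp : p.1 = i₀
      · exact ⟨Sum.inl i₀, fun hne => absurd hp hne⟩
      · obtain ⟨u, hu, hcase⟩ := cover_of_isolating hk hiso p.1 p.2
        rcases hcase with rfl | ⟨c, rfl⟩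
        · exact (hind (Finset.mem_coe.mpr hu) (Finset.mem_coe.mpr hi₀)
            (by simp [hp]) (adj_ll.mpr hp)).elim
        · exact ⟨_, fun _ => ⟨hu, c, rfl⟩⟩
    choose f hf using hch
    have hcard : ((Finset.univ.erase i₀) ×ˢ (Finset.univ : Finset (Fin s))).card ≤
        (S.erase (Sum.inl i₀)).card := by
      refine Finset.card_le_card_of_injOn f ?_ ?_
      · rintro ⟨a, b⟩ hp
        simp only [Finset.coe_product, Set.mem_prod, Finset.mem_coe, Finset.mem_product, Finset.mem_erase, Finset.mem_univ, and_true] at hp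
        obtain ⟨hfS, c, hfc⟩ := hf (a, b) hp
        exact Finset.mem_erase.mpr ⟨by simp [hfc], hfS⟩
      · rintro ⟨a, b⟩ hp ⟨a', b'⟩ hp' hEq
        simp only [Finset.coe_product, Set.mem_prod, Finset.mem_coe, Finset.mem_erase,
          Finset.mem_univ, and_true] at hp hp'
        obtain ⟨-, c, hfc⟩ := hf (a, b) hp
        obtain ⟨-, c', hfc'⟩ := hf (a', b') hp'
        rw [hfc, hfc'] at hEq
        simp only [Sum.inr.injEq, Prod.mk.injEq] at hEq
        exact Prod.ext hEq.1 hEq.2.1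
    have h1 : ((Finset.univ.erase i₀) ×ˢ (Finset.univ : Finset (Fin s))).card
        = (t - 1) * s := by simp [Finset.card_erase_of_mem]
    have h2 : (S.erase (Sum.inl i₀)).card = S.card - 1 := Finset.card_erase_of_mem hi₀
    have h3 : 0 < S.card := Finset.card_pos.mpr ⟨_, hi₀⟩
    omega
  · push_neg at hex
    have hch : ∀ p : Fin t × Fin s, ∃ u, u ∈ S ∧ ∃ c, u = Sum.inr (p.1, p.2, c) := by
      intro p
      obtain ⟨u, hu, hcase⟩ := cover_of_isolating hk hiso p.1 p.2
      rcases hcase with rfl | ⟨c, rfl⟩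
      · exact absurd hu (hex p.1)
      · exact ⟨_, hu, c, rfl⟩
    choose f hfS hfc using hch
    have hcard : ((Finset.univ : Finset (Fin t × Fin s))).card ≤ S.card := by
      refine Finset.card_le_card_of_injOn f (fun p _ => hfS p) ?_
      rintro ⟨a, b⟩ - ⟨a', b'⟩ - hEq
      obtain ⟨c, hfc1⟩ := hfc (a, b)
      obtain ⟨c', hfc2⟩ := hfc (a', b')
      rw [hfc1, hfc2] at hEq
      simp only [Sum.inr.injEq, Prod.mk.injEq] at hEq
      exact Prod.ext hEq.1 hEq.2.1
    have h1 : ((Finset.univ : Finset (Fin t × Fin s))).card = t * s := by simp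
    have htt : (t - 1 + 1) * s = t * s := by rw [Nat.sub_add_cancel ht]
    have hts : (t - 1) * s + s = t * s := by rw [← htt]; ring
    omega

lemma iota'_eq (hk : 0 < k) (ht : 0 < t) (hs : 0 < s) :
    iota' (GraphGts t s k) k = 1 + (t - 1) * s := by
  classical
  have i₀ : Fin t := ⟨0, ht⟩
  have hmem : 1 + (t - 1) * s ∈ {n | ∃ S : Finset (GtsVertex t s k), S.card = n ∧
      IsIsolating (GraphGts t s k) k ↑S ∧ IsIndep (GraphGts t s k) ↑S} :=
    ⟨Sprime t s k hk i₀, Sprime_card hk i₀, Sprime_isolating hk i₀, Sprime_indep hk i₀⟩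
  refine le_antisymm (Nat.sInf_le hmem) (le_csInf ⟨_, hmem⟩ ?_)
  rintro n ⟨S, rfl, hiso, hind⟩
  exact indep_isolating_card_ge hk ht hs hiso hind

lemma degree_inl (hk : 0 < k) (i : Fin t) :
    (GraphGts t s k).degree (Sum.inl i) = t - 1 + s := by
  classical
  have hE : (GraphGts t s k).neighborFinset (Sum.inl i) =
      ((Finset.univ.erase i).image (Sum.inl : Fin t → GtsVertex t s k)) ∪
        (Finset.univ.image fun b : Fin s => (Sum.inr (i, b, ⟨0, hk⟩) : GtsVertex t s k)) := by
    ext v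
    rw [SimpleGraph.mem_neighborFinset]
    rcases v with j | ⟨a, b, c⟩
    · simp only [adj_ll, Finset.mem_union, Finset.mem_image, Finset.mem_erase,
        Finset.mem_univ, and_true, true_and, Sum.inl.injEq, reduceCtorEq, and_false,
        false_and, exists_false, or_false]
      constructor
      · intro hne; exact ⟨j, fun hEq => hne hEq.symm, rfl⟩
      · rintro ⟨j', hne, rfl⟩; exact fun hEq => hne hEq.symm
    · simp only [adj_lr, Finset.mem_union, Finset.mem_image, Finset.mem_erase,
        Finset.mem_univ, and_true, true_and, reduceCtorEq, and_false, false_and,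
        exists_false, false_or, Sum.inr.injEq, Prod.mk.injEq]
      constructor
      · rintro ⟨rfl, hc⟩; exact ⟨b, rfl, rfl, Fin.ext hc.symm⟩
      · rintro ⟨b', rfl, rfl, rfl⟩; exact ⟨rfl, rfl⟩
  show ((GraphGts t s k).neighborFinset (Sum.inl i)).card = t - 1 + s
  rw [hE, Finset.card_union_of_disjoint (by
    rw [Finset.disjoint_left]
    rintro v hv hv'
    simp only [Finset.mem_image] at hv hv'
    obtain ⟨j, -, rfl⟩ := hv
    obtain ⟨b, -, hEq⟩ := hv'
    exact absurd hEq (by simp))]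
  rw [Finset.card_image_of_injective _ Sum.inl_injective,
    Finset.card_image_of_injective _ (fun b b' hEq => by simpa using hEq)]
  simp [Finset.card_erase_of_mem]

lemma degree_inr (hk : 0 < k) (a : Fin t) (b : Fin s) (c : Fin k) :
    (GraphGts t s k).degree (Sum.inr (a, b, c)) ≤ k := by
  classical
  have hsub : (GraphGts t s k).neighborFinset (Sum.inr (a, b, c)) ⊆
      ((Finset.univ.erase c).image fun c' : Fin k => (Sum.inr (a, b, c') : GtsVertex t s k))
        ∪ {Sum.inl a} := by
    intro v hv
    rw [SimpleGraph.mem_neighborFinset] at hv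
    rcases v with j | ⟨a', b', c'⟩
    · obtain ⟨rfl, -⟩ := adj_lr.mp hv.symm
      simp
    · obtain ⟨rfl, rfl, hne⟩ := adj_rr.mp hv
      exact Finset.mem_union_left _ (Finset.mem_image.mpr
        ⟨c', Finset.mem_erase.mpr ⟨fun hEq => hne hEq.symm, Finset.mem_univ _⟩, rfl⟩)
  calc (GraphGts t s k).degree (Sum.inr (a, b, c)) ≤
      (((Finset.univ.erase c).image fun c' : Fin k =>
          (Sum.inr (a, b, c') : GtsVertex t s k)) ∪ {Sum.inl a}).card :=
        Finset.card_le_card hsub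
    _ ≤ ((Finset.univ.erase c).image fun c' : Fin k =>
          (Sum.inr (a, b, c') : GtsVertex t s k)).card + 1 := Finset.card_union_le _ _
    _ ≤ (k - 1) + 1 := by
        refine Nat.add_le_add_right (le_trans Finset.card_image_le ?_) 1
        simp [Finset.card_erase_of_mem]
    _ = k := by omega

lemma maxDegree_eq (hk : 0 < k) (ht : 0 < t) (hks : k ≤ t - 1 + s) :
    (GraphGts t s k).maxDegree = t - 1 + s := by
  classical
  refine le_antisymm (SimpleGraph.maxDegree_le_of_forall_degree_le _ _ fun v => ?_) ?_
  · rcases v with i | ⟨a, b, c⟩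
    · exact le_of_eq (degree_inl hk i)
    · exact le_trans (degree_inr hk a b c) hks
  · rw [← degree_inl hk ⟨0, ht⟩]
    exact SimpleGraph.degree_le_maxDegree _ _

end GtsAux

/-- For G = G(t, t² − t + 1): Δ(G) = t², ι_k(G) = t, ι'_k(G) = t³ − 2t² + 2t, and the
ratio ι'_k/ι_k equals Δ − 2√Δ + 2, so the bound is sharp for square Δ. -/
theorem stmt_14 (t k : ℕ) (ht : 0 < t) (hk : 0 < k) (h : t ^ 2 ≥ k) :
    (GraphGts t (t ^ 2 - t + 1) k).maxDegree = t ^ 2 ∧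
    iota (GraphGts t (t ^ 2 - t + 1) k) k = t ∧
    (iota' (GraphGts t (t ^ 2 - t + 1) k) k : ℤ) = t ^ 3 - 2 * t ^ 2 + 2 * t ∧
    (iota' (GraphGts t (t ^ 2 - t + 1) k) k : ℝ) / (iota (GraphGts t (t ^ 2 - t + 1) k) k : ℝ)
      = ((GraphGts t (t ^ 2 - t + 1) k).maxDegree : ℝ)
        - 2 * Real.sqrt ((GraphGts t (t ^ 2 - t + 1) k).maxDegree : ℝ) + 2 := by
  have hs : 0 < t ^ 2 - t + 1 := Nat.succ_pos _
  have h1 : t ≤ t ^ 2 := Nat.le_self_pow two_ne_zero t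
  have hΔ : t - 1 + (t ^ 2 - t + 1) = t ^ 2 := by omega
  have hmax : (GraphGts t (t ^ 2 - t + 1) k).maxDegree = t ^ 2 := by
    rw [maxDegree_eq hk ht (by omega)]; exact hΔ
  have hio : iota (GraphGts t (t ^ 2 - t + 1) k) k = t := iota_eq hk hs
  have hio' : iota' (GraphGts t (t ^ 2 - t + 1) k) k = 1 + (t - 1) * (t ^ 2 - t + 1) :=
    iota'_eq hk ht hs
  have hZ : (iota' (GraphGts t (t ^ 2 - t + 1) k) k : ℤ) = t ^ 3 - 2 * t ^ 2 + 2 * t := by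
    rw [hio']
    push_cast [Nat.cast_sub h1, Nat.cast_sub ht]
    ring
  refine ⟨hmax, hio, hZ, ?_⟩
  have hR : (iota' (GraphGts t (t ^ 2 - t + 1) k) k : ℝ)
      = (t : ℝ) ^ 3 - 2 * t ^ 2 + 2 * t := by exact_mod_cast hZ
  have htR : (0 : ℝ) < t := by exact_mod_cast ht
  rw [hmax, hio, hR]
  push_cast
  rw [Real.sqrt_sq htR.le]
  field_simp
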